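/- arXiv:2012.13381 — 3 statements merged into one kernel-verified Lean document; each statement's English description precedes it below -/
import Mathlib

section
/- Let A be a stable m×m real matrix (all eigenvalues have strictly negative real part) and C a symmetric m×m real matrix. If a symmetric matrix X satisfies (AX + X Aᵀ)/2 = −C, then X = ∫₀^∞ e^{(t/2)A} C e^{(t/2)Aᵀ} dt. -/
open Matrix MeasureTheory NormedSpace Filter Topology Set Nat

attribute [local instance] Matrix.linftyOpNormedAddCommGroup Matrix.linftyOpNormedRing
  Matrix.linftyOpNormedAlgebra

namespace Stmt6


variable {m : ℕ}

lemma tendsto_pow_mul_exp_mul (n : ℕ) {b : ℝ} (hb : b < 0) :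
    Tendsto (fun t : ℝ => t ^ n * Real.exp (b * t)) atTop (𝓝 0) := by
  have h1 : Tendsto (fun t : ℝ => (-b * t)) atTop atTop :=
    Tendsto.const_mul_atTop (by linarith) tendsto_id
  have h2 := (Real.tendsto_pow_mul_exp_neg_atTop_nhds_zero n).comp h1
  have h3 : Tendsto (fun t : ℝ => (-b)⁻¹ ^ n * ((-b*t) ^ n * Real.exp (-(-b*t)))) atTop
      (𝓝 ((-b)⁻¹ ^ n * 0)) := h2.const_mul _
  rw [mul_zero] at h3
  refine h3.congr fun t => ?_
  have hb' : (-b : ℝ) ≠ 0 := ne_of_gt (by linarith)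
  field_simp; ring_nf
  rw [← mul_pow, mul_inv_cancel₀ (ne_of_lt hb), one_pow, one_mul, pow_mul', neg_one_sq, one_pow,
    mul_one]

noncomputable def mulVecCLM (v : Fin m → ℂ) : Matrix (Fin m) (Fin m) ℂ →L[ℂ] (Fin m → ℂ) :=
  LinearMap.toContinuousLinearMap
    { toFun := fun M => M *ᵥ v,
      map_add' := fun M N => Matrix.add_mulVec M N v,
      map_smul' := fun c M => Matrix.smul_mulVec c M v }

@[simp] lemma mulVecCLM_apply (v : Fin m → ℂ) (M : Matrix (Fin m) (Fin m) ℂ) :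
    mulVecCLM v M = M *ᵥ v := rfl

lemma exp_smul_mulVec_eq (B : Matrix (Fin m) (Fin m) ℂ) (μ : ℂ) (v : Fin m → ℂ) (k : ℕ)
    (hk : ((B - μ • 1) ^ k) *ᵥ v = 0) (t : ℝ) :
    exp (t • B) *ᵥ v = ∑ n ∈ Finset.range k,
      (Complex.exp (t * μ) * ((n ! : ℂ))⁻¹ * (t : ℂ) ^ n) • ((B - μ • 1) ^ n *ᵥ v) := by
  set N : Matrix (Fin m) (Fin m) ℂ := B - μ • 1 with hN
  have htB : t • B = ((t : ℂ) * μ) • (1 : Matrix (Fin m) (Fin m) ℂ) + (t : ℂ) • N := by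
    rw [hN, smul_sub, ← algebraMap_smul ℂ t B, smul_smul]
    simp
  have hcomm : Commute (((t : ℂ) * μ) • (1 : Matrix (Fin m) (Fin m) ℂ)) ((t : ℂ) • N) :=
    ((Commute.one_left _).smul_left _).smul_right _
  have hexp1 : exp (((t : ℂ) * μ) • (1 : Matrix (Fin m) (Fin m) ℂ))
      = Complex.exp ((t : ℂ) * μ) • (1 : Matrix (Fin m) (Fin m) ℂ) := by
    have := (algebraMap_exp_comm ((t : ℂ) * μ) : algebraMap ℂ (Matrix (Fin m) (Fin m) ℂ) _ = _)
    simp only [Algebra.algebraMap_eq_smul_one] at this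
    rw [Complex.exp_eq_exp_ℂ]; exact this.symm
  have hexpN : exp ((t : ℂ) • N) *ᵥ v = ∑ n ∈ Finset.range k,
      (((n ! : ℂ))⁻¹ * (t : ℂ) ^ n) • (N ^ n *ᵥ v) := by
    have hsum : Summable fun n : ℕ => ((n ! : ℂ))⁻¹ • ((t : ℂ) • N) ^ n :=
      expSeries_summable' ((t : ℂ) • N)
    have h1 : exp ((t : ℂ) • N) *ᵥ v
        = ∑' n : ℕ, (((n ! : ℂ))⁻¹ * (t : ℂ) ^ n) • (N ^ n *ᵥ v) := by
      rw [exp_eq_tsum ℂ]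
      have := (mulVecCLM v).map_tsum hsum
      simp only [mulVecCLM_apply] at this
      rw [this]
      congr 1; funext n
      rw [smul_pow, Matrix.smul_mulVec, Matrix.smul_mulVec, smul_smul]
    rw [h1]
    refine tsum_eq_sum fun n hn => ?_
    rw [Finset.mem_range, not_lt] at hn
    have : N ^ n *ᵥ v = 0 := by
      have : N ^ n = N ^ (n - k) * N ^ k := by rw [← pow_add]; congr 1; omega
      rw [this, ← Matrix.mulVec_mulVec, hk, Matrix.mulVec_zero]
    rw [this, smul_zero]
  rw [htB, Matrix.exp_add_of_commute _ _ hcomm, hexp1, smul_mul_assoc, one_mul,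
    Matrix.smul_mulVec, hexpN, Finset.smul_sum]
  congr 1; funext n
  rw [smul_smul, mul_assoc]



variable {m : ℕ}

lemma tendsto_exp_smul_mulVec (B : Matrix (Fin m) (Fin m) ℂ)
    (hB : ∀ μ ∈ spectrum ℂ B, μ.re < 0) (v : Fin m → ℂ) :
    Tendsto (fun t : ℝ => exp (t • B) *ᵥ v) atTop (𝓝 0) := by
  let S : Submodule ℂ (Fin m → ℂ) :=
  { carrier := {w | Tendsto (fun t : ℝ => exp (t • B) *ᵥ w) atTop (𝓝 0)}
    add_mem' := fun {a b} ha hb => by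
      simpa [Matrix.mulVec_add] using ha.add hb
    zero_mem' := by simpa [Matrix.mulVec_zero] using (tendsto_const_nhds :
      Tendsto (fun _ : ℝ => (0 : Fin m → ℂ)) atTop _)
    smul_mem' := fun c a ha => by
      simpa [Matrix.mulVec_smul] using ha.const_smul c }
  suffices h : (⊤ : Submodule ℂ (Fin m → ℂ)) ≤ S from h trivial
  rw [← Module.End.iSup_maxGenEigenspace_eq_top (Matrix.toLinAlgEquiv' B)]
  refine iSup_le fun μ w hw => ?_
  obtain ⟨k, hk⟩ := (Module.End.mem_maxGenEigenspace _ _ _).mp hw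
  have hk' : ((B - μ • 1) ^ k) *ᵥ w = 0 := by
    have h1 : Matrix.toLinAlgEquiv' ((B - μ • 1) ^ k) w = 0 := by
      rw [map_pow, map_sub, _root_.map_smul, _root_.map_one]; exact hk
    rwa [Matrix.toLinAlgEquiv'_apply] at h1
  rcases eq_or_ne w 0 with rfl | hw0
  · exact S.zero_mem
  have hμ : μ.re < 0 := by
    apply hB
    rw [← AlgEquiv.spectrum_eq (Matrix.toLinAlgEquiv' (R := ℂ) (n := Fin m)) B]
    refine Module.End.hasEigenvalue_iff_mem_spectrum.mp ?_
    refine Module.End.hasEigenvalue_of_hasGenEigenvalue (k := k) ?_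
    exact (Submodule.ne_bot_iff _).mpr ⟨w, Module.End.mem_genEigenspace_nat.mpr hk, hw0⟩
  show Tendsto _ _ _
  rw [tendsto_congr (exp_smul_mulVec_eq B μ w k hk')]
  have h0 : (0 : Fin m → ℂ) = ∑ n ∈ Finset.range k, (0 : Fin m → ℂ) := by simp
  rw [h0]
  refine tendsto_finset_sum _ fun n _ => ?_
  rw [tendsto_zero_iff_norm_tendsto_zero]
  have hbound : ∀ᶠ t : ℝ in atTop,
      ‖(Complex.exp (↑t * μ) * ((n ! : ℂ))⁻¹ * (↑t : ℂ) ^ n) • ((B - μ • 1) ^ n *ᵥ w)‖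
      = ((n ! : ℝ))⁻¹ * ‖(B - μ • 1) ^ n *ᵥ w‖ * (t ^ n * Real.exp (μ.re * t)) := by
    filter_upwards [eventually_ge_atTop (0:ℝ)] with t ht
    rw [norm_smul]
    simp only [norm_mul, Complex.norm_exp, norm_inv, Complex.norm_natCast,
      norm_pow, Complex.norm_real, Real.norm_eq_abs, abs_of_nonneg ht]
    have : (↑t * μ).re = μ.re * t := by simp [Complex.mul_re]; ring
    rw [this]; ring
  have hlim : Tendsto (fun t : ℝ => ((n ! : ℝ))⁻¹ * ‖(B - μ • 1) ^ n *ᵥ w‖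
      * (t ^ n * Real.exp (μ.re * t))) atTop (𝓝 0) := by
    simpa using (tendsto_pow_mul_exp_mul n hμ).const_mul (((n ! : ℝ))⁻¹ * ‖(B - μ • 1) ^ n *ᵥ w‖)
  exact squeeze_zero' (by filter_upwards with t using norm_nonneg _)
    (by filter_upwards [hbound] with t ht using le_of_eq ht) hlim



variable {m : ℕ}

lemma entry_norm_le (M : Matrix (Fin m) (Fin m) ℝ) (i j : Fin m) : ‖M i j‖ ≤ ‖M‖ := by
  rw [Matrix.linfty_opNorm_def]
  have h1 : ‖M i j‖₊ ≤ ∑ j' : Fin m, ‖M i j'‖₊ :=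
    Finset.single_le_sum (f := fun j' : Fin m => ‖M i j'‖₊)
      (fun _ _ => _root_.zero_le) (Finset.mem_univ j)
  have h2 : (∑ j' : Fin m, ‖M i j'‖₊) ≤ (Finset.univ : Finset (Fin m)).sup
      fun i : Fin m => ∑ j' : Fin m, ‖M i j'‖₊ :=
    Finset.le_sup (f := fun i : Fin m => ∑ j' : Fin m, ‖M i j'‖₊) (Finset.mem_univ i)
  exact_mod_cast h1.trans h2

lemma norm_le_sum_entries (M : Matrix (Fin m) (Fin m) ℝ) :
    ‖M‖ ≤ ∑ i : Fin m, ∑ j : Fin m, ‖M i j‖ := by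
  rw [Matrix.linfty_opNorm_def]
  have h : ((Finset.univ : Finset (Fin m)).sup fun i : Fin m => ∑ j : Fin m, ‖M i j‖₊)
      ≤ ∑ i : Fin m, ∑ j : Fin m, ‖M i j‖₊ :=
    Finset.sup_le fun i _ => Finset.single_le_sum
      (f := fun i : Fin m => ∑ j : Fin m, ‖M i j‖₊) (fun _ _ => _root_.zero_le) (Finset.mem_univ i)
  have h2 : (((∑ i : Fin m, ∑ j : Fin m, ‖M i j‖₊ : NNReal)) : ℝ)
      = ∑ i : Fin m, ∑ j : Fin m, ‖M i j‖ := by push_cast; rfl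
  rw [← h2]
  exact_mod_cast h

lemma tendsto_norm_exp_smul (A : Matrix (Fin m) (Fin m) ℝ)
    (hA : ∀ μ ∈ spectrum ℂ (A.map Complex.ofReal), μ.re < 0) :
    Tendsto (fun t : ℝ => ‖exp (t • A)‖) atTop (𝓝 0) := by
  set Aℂ := A.map Complex.ofReal with hAc
  have hmap : ∀ t : ℝ, (exp (t • A)).map Complex.ofReal = exp (t • Aℂ) := by
    intro t
    have h1 := map_exp (AlgHom.mapMatrix (Complex.ofRealAm) (m := Fin m))
      (Continuous.matrix_map continuous_id Complex.continuous_ofReal) (t • A)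
    have h2 : (AlgHom.mapMatrix (Complex.ofRealAm) (m := Fin m)) (t • A) = t • Aℂ := by
      rw [_root_.map_smul]; rfl
    rw [h2] at h1
    exact h1
  have hentry : ∀ i j : Fin m, Tendsto (fun t : ℝ => ‖exp (t • A) i j‖) atTop (𝓝 0) := by
    intro i j
    have h1 : Tendsto (fun t : ℝ => exp (t • Aℂ) *ᵥ Pi.single j 1) atTop (𝓝 0) :=
      tendsto_exp_smul_mulVec Aℂ hA _
    have h2 : Tendsto (fun t : ℝ => (exp (t • Aℂ) *ᵥ Pi.single j 1) i) atTop (𝓝 0) := by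
      have := ((continuous_apply i).tendsto (0 : Fin m → ℂ)).comp h1
      exact this
    have h3 : ∀ t : ℝ, (exp (t • Aℂ) *ᵥ Pi.single j 1) i = exp (t • Aℂ) i j := by
      intro t; rw [Matrix.mulVec_single]; simp
    rw [tendsto_congr h3] at h2
    have h4 : ∀ t : ℝ, exp (t • Aℂ) i j = Complex.ofReal (exp (t • A) i j) := by
      intro t; rw [← hmap t]; rfl
    rw [tendsto_congr h4] at h2
    have h5 : Tendsto (fun t : ℝ => exp (t • A) i j) atTop (𝓝 0) := by
      have := (Complex.continuous_re.tendsto 0).comp h2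
      exact this
    exact h5.norm.congr' (by simp) |>.mono_right (by simp)
  have hsum : Tendsto (fun t : ℝ => ∑ i : Fin m, ∑ j : Fin m, ‖exp (t • A) i j‖)
      atTop (𝓝 0) := by
    have := tendsto_finset_sum (Finset.univ : Finset (Fin m))
      (fun i _ => tendsto_finset_sum (Finset.univ : Finset (Fin m))
        (fun j _ => hentry i j))
    simpa using this
  exact squeeze_zero (fun t => norm_nonneg _) (fun t => norm_le_sum_entries _) hsum



variable {m : ℕ}

lemma exists_exp_decay (A : Matrix (Fin m) (Fin m) ℝ)
    (hA : ∀ μ ∈ spectrum ℂ (A.map Complex.ofReal), μ.re < 0) :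
    ∃ c ε : ℝ, 0 < ε ∧ ∀ t : ℝ, 0 ≤ t → ‖exp (t • A)‖ ≤ c * Real.exp (-ε * t) := by
  have htend := tendsto_norm_exp_smul A hA
  have hev : ∀ᶠ t : ℝ in atTop, ‖exp (t • A)‖ < 1/2 :=
    htend.eventually_lt_const (by norm_num)
  obtain ⟨T₀, hT₀⟩ := eventually_atTop.mp hev
  set T : ℝ := max T₀ 1 with hTdef
  have hT1 : (0:ℝ) < T := lt_of_lt_of_le one_pos (le_max_right _ _)
  have hThalf : ∀ t : ℝ, T ≤ t → ‖exp (t • A)‖ ≤ 1/2 :=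
    fun t ht => (hT₀ t ((le_max_left _ _).trans ht)).le
  -- bound on [0, T]
  have hcont : ContinuousOn (fun t : ℝ => exp (t • A)) (Icc 0 T) :=
    (exp_continuous.comp (continuous_id.smul continuous_const)).continuousOn
  obtain ⟨M, hM⟩ := (isCompact_Icc (a := (0:ℝ)) (b := T)).exists_bound_of_continuousOn hcont
  have hM0 : 0 ≤ M := le_trans (norm_nonneg _) (hM 0 ⟨le_refl _, hT1.le⟩)
  -- key induction
  have hkey : ∀ n : ℕ, ∀ s : ℝ, 0 ≤ s → s ≤ T →
      ‖exp ((s + n * T) • A)‖ ≤ M * (1/2) ^ n := by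
    intro n
    induction n with
    | zero => intro s h0 h1; simpa using hM s ⟨h0, h1⟩
    | succ n ih =>
      intro s h0 h1
      push_cast
      have hsplit : (s + ((n:ℝ)+1) * T) • A = T • A + (s + (n:ℝ) * T) • A := by
        rw [← add_smul]; ring_nf
      have hcomm : Commute (T • A) ((s + n * T) • A) :=
        ((Commute.refl A).smul_left T).smul_right _
      rw [hsplit, Matrix.exp_add_of_commute _ _ hcomm]
      calc ‖exp (T • A) * exp ((s + n * T) • A)‖
          ≤ ‖exp (T • A)‖ * ‖exp ((s + n * T) • A)‖ := norm_mul_le _ _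
        _ ≤ (1/2) * (M * (1/2) ^ n) := by
            apply mul_le_mul (hThalf T le_rfl) (ih s h0 h1) (norm_nonneg _) (by norm_num)
        _ = M * (1/2) ^ (n+1) := by ring
  refine ⟨2 * M, Real.log 2 / T, div_pos (Real.log_pos one_lt_two) hT1, fun t ht => ?_⟩
  set n : ℕ := ⌊t / T⌋₊ with hn
  have hnle : (n : ℝ) * T ≤ t := by
    rw [← le_div_iff₀ hT1]
    exact Nat.floor_le (div_nonneg ht hT1.le)
  have htlt : t < (n + 1) * T := by
    rw [← div_lt_iff₀ hT1]
    exact Nat.lt_floor_add_one _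
  have hs0 : 0 ≤ t - n * T := by linarith
  have hsT : t - n * T ≤ T := by nlinarith
  have hb := hkey n (t - n * T) hs0 hsT
  rw [sub_add_cancel] at hb
  refine hb.trans ?_
  have hhalf : ((1:ℝ)/2) ^ n ≤ 2 * Real.exp (-(Real.log 2 / T) * t) := by
    have h2 : ((1:ℝ)/2) ^ n = Real.exp (-(n * Real.log 2)) := by
      rw [Real.exp_neg, Real.exp_nat_mul, Real.exp_log two_pos, one_div, inv_pow]
    have h3 : 2 * Real.exp (-(Real.log 2 / T) * t) = Real.exp (Real.log 2 - Real.log 2 / T * t)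
        := by rw [Real.exp_sub, Real.exp_log two_pos, neg_mul, Real.exp_neg]; ring
    rw [h2, h3, Real.exp_le_exp]
    have hlog : 0 < Real.log 2 := Real.log_pos one_lt_two
    have : Real.log 2 / T * t ≤ Real.log 2 / T * ((n + 1) * T) := by
      apply mul_le_mul_of_nonneg_left htlt.le (by positivity)
    have heq : Real.log 2 / T * ((n + 1) * T) = (n + 1) * Real.log 2 := by
      field_simp
    nlinarith
  calc M * (1/2) ^ n ≤ M * (2 * Real.exp (-(Real.log 2 / T) * t)) :=
        mul_le_mul_of_nonneg_left hhalf hM0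
    _ = 2 * M * Real.exp (-(Real.log 2 / T) * t) := by ring


variable {m : ℕ}

lemma spectrum_transpose (M : Matrix (Fin m) (Fin m) ℂ) :
    spectrum ℂ Mᵀ = spectrum ℂ M := by
  ext μ
  have key : IsUnit (algebraMap ℂ (Matrix (Fin m) (Fin m) ℂ) μ - Mᵀ)
      ↔ IsUnit (algebraMap ℂ (Matrix (Fin m) (Fin m) ℂ) μ - M) := by
    have halg : algebraMap ℂ (Matrix (Fin m) (Fin m) ℂ) μ - Mᵀ
        = (algebraMap ℂ (Matrix (Fin m) (Fin m) ℂ) μ - M)ᵀ := by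
      rw [Matrix.transpose_sub]
      congr 1
      rw [show (algebraMap ℂ (Matrix (Fin m) (Fin m) ℂ) μ)ᵀ
          = algebraMap ℂ (Matrix (Fin m) (Fin m) ℂ) μ by
        rw [Algebra.algebraMap_eq_smul_one, Matrix.transpose_smul, Matrix.transpose_one]]
    rw [halg, Matrix.isUnit_iff_isUnit_det, Matrix.det_transpose,
      ← Matrix.isUnit_iff_isUnit_det]
  simp only [spectrum.mem_iff, key]

noncomputable def entryCLM (i j : Fin m) : Matrix (Fin m) (Fin m) ℝ →L[ℝ] ℝ :=
  LinearMap.toContinuousLinearMap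
    { toFun := fun M => M i j, map_add' := fun _ _ => rfl, map_smul' := fun _ _ => rfl }

@[simp] lemma entryCLM_apply (i j : Fin m) (M : Matrix (Fin m) (Fin m) ℝ) :
    entryCLM i j M = M i j := rfl

lemma hasDerivAt_entry {f : ℝ → Matrix (Fin m) (Fin m) ℝ} {D : Matrix (Fin m) (Fin m) ℝ}
    {t : ℝ} (hf : HasDerivAt f D t) (i j : Fin m) :
    HasDerivAt (fun s => f s i j) (D i j) t := by
  have := (entryCLM i j).hasFDerivAt.comp_hasDerivAt t hf
  exact this


end Stmt6

open Stmt6 in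
/-- If `A` is stable (all eigenvalues have strictly negative real part), `C` is symmetric and
the symmetric matrix `X` solves `(AX + XAᵀ)/2 = −C`, then
`X = ∫₀^∞ e^{(t/2)A} C e^{(t/2)Aᵀ} dt` (entrywise). -/
theorem stmt6 {m : ℕ} (A C X : Matrix (Fin m) (Fin m) ℝ)
    (hstable : ∀ μ ∈ spectrum ℂ (A.map (Complex.ofReal)), μ.re < 0)
    (hC : C.IsSymm) (hX : X.IsSymm)
    (hlyap : ((1:ℝ)/2) • (A * X + X * Aᵀ) = -C) :
    ∀ i j, X i j = ∫ t in Set.Ioi (0:ℝ),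
      (NormedSpace.exp ((t/2) • A) * C * NormedSpace.exp ((t/2) • Aᵀ)) i j := by
  intro i j
  have hAt : ∀ μ ∈ spectrum ℂ (Aᵀ.map Complex.ofReal), μ.re < 0 := by
    intro μ hμ
    apply hstable
    rw [Matrix.transpose_map, spectrum_transpose] at hμ
    exact hμ
  obtain ⟨c₁, ε₁, hε₁, hb₁⟩ := exists_exp_decay A hstable
  obtain ⟨c₂, ε₂, hε₂, hb₂⟩ := exists_exp_decay Aᵀ hAt
  have hc₁ : 0 ≤ c₁ := by
    have h := hb₁ 0 le_rfl
    simp only [mul_zero, Real.exp_zero, mul_one] at h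
    exact le_trans (norm_nonneg _) h
  have hc₂ : 0 ≤ c₂ := by
    have h := hb₂ 0 le_rfl
    simp only [mul_zero, Real.exp_zero, mul_one] at h
    exact le_trans (norm_nonneg _) h
  set P : ℝ → Matrix (Fin m) (Fin m) ℝ := fun t => exp ((t/2) • A) with hPdef
  set Q : ℝ → Matrix (Fin m) (Fin m) ℝ := fun t => exp ((t/2) • Aᵀ) with hQdef
  have hPd : ∀ t : ℝ, HasDerivAt P ((2:ℝ)⁻¹ • (P t * A)) t := by
    intro t
    have h1 := hasDerivAt_exp_smul_const (𝕂 := ℝ) A (t/2)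
    have h2 : HasDerivAt (fun s : ℝ => s/2) (2:ℝ)⁻¹ t := by
      simpa using (hasDerivAt_id t).div_const 2
    have h3 := h1.scomp t h2
    exact h3
  have hQd : ∀ t : ℝ, HasDerivAt Q ((2:ℝ)⁻¹ • (Aᵀ * Q t)) t := by
    intro t
    have h1 := hasDerivAt_exp_smul_const' (𝕂 := ℝ) Aᵀ (t/2)
    have h2 : HasDerivAt (fun s : ℝ => s/2) (2:ℝ)⁻¹ t := by
      simpa using (hasDerivAt_id t).div_const 2
    have h3 := h1.scomp t h2
    exact h3
  have hΦd : ∀ t : ℝ, HasDerivAt (fun s => P s * X * Q s) (-(P t * C * Q t)) t := by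
    intro t
    have h1 := ((hPd t).mul_const X).mul (hQd t)
    refine HasDerivAt.congr_deriv h1 ?_
    have key : (2:ℝ)⁻¹ • (P t * A) * X * Q t + P t * X * ((2:ℝ)⁻¹ • (Aᵀ * Q t))
        = P t * (((1:ℝ)/2) • (A * X + X * Aᵀ)) * Q t := by
      simp only [smul_mul_assoc, mul_smul_comm, mul_add, add_mul, smul_add, mul_assoc, one_div]
    rw [key, hlyap]
    simp [mul_neg, neg_mul]
  have hGentry : ∀ t : ℝ, HasDerivAt (fun s => (P s * X * Q s) i j)
      (-((P t * C * Q t) i j)) t := by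
    intro t
    have h := hasDerivAt_entry (hΦd t) i j
    simpa using h
  have hPc : Continuous P :=
    exp_continuous.comp ((continuous_id.div_const 2).smul continuous_const)
  have hQc : Continuous Q :=
    exp_continuous.comp ((continuous_id.div_const 2).smul continuous_const)
  have hGcont : Continuous fun t : ℝ => (P t * C * Q t) i j :=
    Continuous.matrix_elem ((hPc.mul continuous_const).mul hQc) i j
  have hδ : (0:ℝ) < (ε₁ + ε₂)/2 := by linarith
  have hexpmul : ∀ t : ℝ, Real.exp (-ε₁ * (t/2)) * Real.exp (-ε₂ * (t/2))
      = Real.exp (-((ε₁+ε₂)/2) * t) := by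
    intro t; rw [← Real.exp_add]; congr 1; ring
  have hbound : ∀ (Y : Matrix (Fin m) (Fin m) ℝ) (t : ℝ), 0 ≤ t →
      ‖(P t * Y * Q t) i j‖ ≤ (c₁ * ‖Y‖ * c₂) * Real.exp (-((ε₁+ε₂)/2) * t) := by
    intro Y t ht
    have h1 : ‖(P t * Y * Q t) i j‖ ≤ ‖P t * Y * Q t‖ := entry_norm_le _ i j
    have h2 : ‖P t * Y * Q t‖ ≤ ‖P t‖ * ‖Y‖ * ‖Q t‖ :=
      (norm_mul_le _ _).trans (mul_le_mul_of_nonneg_right (norm_mul_le _ _) (norm_nonneg _))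
    have h3 : ‖P t‖ ≤ c₁ * Real.exp (-ε₁ * (t/2)) := hb₁ (t/2) (by linarith)
    have h4 : ‖Q t‖ ≤ c₂ * Real.exp (-ε₂ * (t/2)) := hb₂ (t/2) (by linarith)
    have h5 : ‖P t‖ * ‖Y‖ ≤ (c₁ * Real.exp (-ε₁ * (t/2))) * ‖Y‖ :=
      mul_le_mul_of_nonneg_right h3 (norm_nonneg _)
    have h6 : ‖P t‖ * ‖Y‖ * ‖Q t‖
        ≤ ((c₁ * Real.exp (-ε₁ * (t/2))) * ‖Y‖) * (c₂ * Real.exp (-ε₂ * (t/2))) :=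
      mul_le_mul h5 h4 (norm_nonneg _)
        (le_trans (mul_nonneg (norm_nonneg _) (norm_nonneg _)) h5)
    have h7 : ((c₁ * Real.exp (-ε₁ * (t/2))) * ‖Y‖) * (c₂ * Real.exp (-ε₂ * (t/2)))
        = (c₁ * ‖Y‖ * c₂) * Real.exp (-((ε₁+ε₂)/2) * t) := by
      rw [← hexpmul t]; ring
    linarith [h1.trans (h2.trans h6)]
  have hint : IntegrableOn (fun t : ℝ => (P t * C * Q t) i j) (Ioi (0:ℝ)) := by
    have hexp : IntegrableOn (fun t : ℝ => Real.exp (-((ε₁+ε₂)/2) * t)) (Ioi (0:ℝ)) :=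
      exp_neg_integrableOn_Ioi 0 hδ
    refine Integrable.mono' (hexp.const_mul (c₁ * ‖C‖ * c₂)) ?_ ?_
    · exact hGcont.aestronglyMeasurable.restrict
    · filter_upwards [ae_restrict_mem measurableSet_Ioi] with t ht
      exact hbound C t (le_of_lt ht)
  have hFTC : ∀ T : ℝ, ∫ t in (0:ℝ)..T, (P t * C * Q t) i j
      = X i j - (P T * X * Q T) i j := by
    intro T
    have hI : IntervalIntegrable (fun t => -((P t * C * Q t) i j)) volume 0 T :=
      (hGcont.neg).intervalIntegrable 0 T
    have h := intervalIntegral.integral_eq_sub_of_hasDerivAt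
      (f := fun s => (P s * X * Q s) i j) (fun t _ => hGentry t) hI
    have h0 : (P 0 * X * Q 0) i j = X i j := by
      have hz : P 0 = 1 := by rw [hPdef]; norm_num [exp_zero]
      have hz' : Q 0 = 1 := by rw [hQdef]; norm_num [exp_zero]
      rw [hz, hz', one_mul, mul_one]
    rw [intervalIntegral.integral_neg] at h
    rw [h0] at h
    linarith [h]
  have hΦlim : Tendsto (fun T : ℝ => (P T * X * Q T) i j) atTop (𝓝 0) := by
    rw [tendsto_zero_iff_norm_tendsto_zero]
    have hg : Tendsto (fun T : ℝ => (c₁ * ‖X‖ * c₂) * Real.exp (-((ε₁+ε₂)/2) * T))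
        atTop (𝓝 0) := by
      have := (tendsto_pow_mul_exp_mul 0 (by linarith : -((ε₁+ε₂)/2) < 0)).const_mul
        (c₁ * ‖X‖ * c₂)
      simpa using this
    refine squeeze_zero' ?_ ?_ hg
    · filter_upwards with T using norm_nonneg _
    · filter_upwards [eventually_ge_atTop (0:ℝ)] with T hT
      exact hbound X T hT
  have h1 : Tendsto (fun T : ℝ => ∫ t in (0:ℝ)..T, (P t * C * Q t) i j) atTop
      (𝓝 (∫ t in Ioi (0:ℝ), (P t * C * Q t) i j)) :=
    intervalIntegral_tendsto_integral_Ioi 0 hint tendsto_id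
  have h2 : Tendsto (fun T : ℝ => ∫ t in (0:ℝ)..T, (P t * C * Q t) i j) atTop
      (𝓝 (X i j)) := by
    simp_rw [hFTC]
    simpa using tendsto_const_nhds.sub hΦlim
  exact (tendsto_nhds_unique h1 h2).symm
end

section
/- Let Γ and Λ be m×m diagonal matrices with positive diagonal entries and Δ² a symmetric m×m matrix such that I − β²ΓΔ²Λ has all eigenvalues with positive real part. Then ∫₀^∞ exp(−(t/2)(I − β²ΓΔ²Λ)) Γ Λ^{-1} exp(−(t/2)(I − β²ΛΔ²Γ)) dt = Γ (I − β²Δ²ΛΓ)^{-1} Λ^{-1}. -/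
open Matrix MeasureTheory

lemma diagonal_congr {m : ℕ} {f g : Fin m → ℝ} (h : ∀ s, f s = g s) :
    Matrix.diagonal f = Matrix.diagonal g := by rw [funext h]

lemma inv_diag' {m : ℕ} {v : Fin m → ℝ} (hv : ∀ s, v s ≠ 0) :
    (Matrix.diagonal v)⁻¹ = Matrix.diagonal (fun s => (v s)⁻¹) := by
  apply Matrix.inv_eq_right_inv
  rw [diagonal_mul_diagonal, show (fun s => v s * (v s)⁻¹) = fun _ => (1:ℝ) from
    funext fun s => mul_inv_cancel₀ (hv s), diagonal_one]

lemma integral_exp_neg_mul_Ioi_zero {d : ℝ} (hd : 0 < d) :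
    ∫ t in Set.Ioi (0:ℝ), Real.exp (-(d * t)) = d⁻¹ := by
  have h := integral_comp_mul_left_Ioi (fun x => Real.exp (-x)) 0 hd
  simp only [mul_zero] at h
  rw [h, integral_exp_neg_Ioi, neg_zero, Real.exp_zero, smul_eq_mul, mul_one]

lemma sandwich_apply {m : ℕ} (P : Matrix (Fin m) (Fin m) ℝ) (v : Fin m → ℝ) (i j : Fin m) :
    (P * Matrix.diagonal v * Pᵀ) i j = ∑ k, P i k * v k * P j k := by
  rw [Matrix.mul_apply]
  refine Finset.sum_congr rfl fun k _ => ?_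
  rw [Matrix.mul_diagonal, Matrix.transpose_apply]

lemma map_mul' {n : ℕ} (A B : Matrix (Fin n) (Fin n) ℝ) :
    (A * B).map Complex.ofReal = A.map Complex.ofReal * B.map Complex.ofReal :=
  Matrix.map_mul (f := Complex.ofRealHom)

lemma det_map' {n : ℕ} (A : Matrix (Fin n) (Fin n) ℝ) :
    (A.map Complex.ofReal).det = Complex.ofReal A.det :=
  (RingHom.map_det Complex.ofRealHom A).symm

lemma mem_spectrum_iff_det {n : Type*} [Fintype n] [DecidableEq n] {𝕜 : Type*} [Field 𝕜]
    (A : Matrix n n 𝕜) (x : 𝕜) :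
    x ∈ spectrum 𝕜 A ↔ (x • (1 : Matrix n n 𝕜) - A).det = 0 := by
  rw [spectrum.mem_iff, Algebra.algebraMap_eq_smul_one, Matrix.isUnit_iff_isUnit_det,
    isUnit_iff_ne_zero, not_not]

/-- For `Γ, Λ` diagonal positive and `Δ²` symmetric with `I − β²ΓΔ²Λ` having all eigenvalues
of positive real part,
`∫₀^∞ e^{−(t/2)(I−β²ΓΔ²Λ)} ΓΛ⁻¹ e^{−(t/2)(I−β²ΛΔ²Γ)} dt = Γ(I−β²Δ²ΛΓ)⁻¹Λ⁻¹`. -/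
theorem stmt9 {m : ℕ} (γ lam : Fin m → ℝ) (hγ : ∀ s, 0 < γ s) (hlam : ∀ s, 0 < lam s)
    (Δ2 : Matrix (Fin m) (Fin m) ℝ) (hsymm : Δ2.IsSymm) (β : ℝ)
    (Γ : Matrix (Fin m) (Fin m) ℝ) (hΓ : Γ = Matrix.diagonal γ)
    (Λ : Matrix (Fin m) (Fin m) ℝ) (hΛ : Λ = Matrix.diagonal lam)
    (hstable : ∀ μ ∈ spectrum ℂ
      (((1 : Matrix (Fin m) (Fin m) ℝ) - β^2 • (Γ * Δ2 * Λ)).map (Complex.ofReal)),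
      0 < μ.re) :
    ∀ i j,
      (∫ t in Set.Ioi (0:ℝ),
        (NormedSpace.exp ((-(t/2)) • ((1 : Matrix (Fin m) (Fin m) ℝ) - β^2 • (Γ * Δ2 * Λ)))
          * (Γ * Λ⁻¹) *
         NormedSpace.exp ((-(t/2)) • ((1 : Matrix (Fin m) (Fin m) ℝ) - β^2 • (Λ * Δ2 * Γ))))
        i j)
      = (Γ * ((1 : Matrix (Fin m) (Fin m) ℝ) - β^2 • (Δ2 * Λ * Γ))⁻¹ * Λ⁻¹) i j := by
  subst hΓ hΛ
  set d : Fin m → ℝ := fun s => Real.sqrt (γ s / lam s) with hd_def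
  set e : Fin m → ℝ := fun s => Real.sqrt (γ s * lam s) with he_def
  have hd : ∀ s, 0 < d s := fun s => Real.sqrt_pos.2 (div_pos (hγ s) (hlam s))
  have he : ∀ s, 0 < e s := fun s => Real.sqrt_pos.2 (mul_pos (hγ s) (hlam s))
  set D : Matrix (Fin m) (Fin m) ℝ := Matrix.diagonal d with hD_def
  set Di : Matrix (Fin m) (Fin m) ℝ := Matrix.diagonal (fun s => (d s)⁻¹) with hDi_def
  set E : Matrix (Fin m) (Fin m) ℝ := Matrix.diagonal e with hE_def
  set S : Matrix (Fin m) (Fin m) ℝ := 1 - β^2 • (E * Δ2 * E) with hS_def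
  set M : Matrix (Fin m) (Fin m) ℝ :=
    1 - β^2 • (Matrix.diagonal γ * Δ2 * Matrix.diagonal lam) with hM_def
  set N : Matrix (Fin m) (Fin m) ℝ :=
    1 - β^2 • (Matrix.diagonal lam * Δ2 * Matrix.diagonal γ) with hN_def
  set K : Matrix (Fin m) (Fin m) ℝ :=
    1 - β^2 • (Δ2 * Matrix.diagonal lam * Matrix.diagonal γ) with hK_def
  have h1 : D * Di = 1 := by
    rw [hD_def, hDi_def, diagonal_mul_diagonal,
      show (fun s => d s * (d s)⁻¹) = fun _ => (1:ℝ) from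
        funext fun s => mul_inv_cancel₀ (hd s).ne', diagonal_one]
  have h2 : Di * D = 1 := by
    rw [hD_def, hDi_def, diagonal_mul_diagonal,
      show (fun s => (d s)⁻¹ * d s) = fun _ => (1:ℝ) from
        funext fun s => inv_mul_cancel₀ (hd s).ne', diagonal_one]
  have hde : ∀ s, d s * e s = γ s := by
    intro s
    rw [hd_def, he_def, ← Real.sqrt_mul (div_pos (hγ s) (hlam s)).le,
      show γ s / lam s * (γ s * lam s) = γ s * γ s from by
        rw [div_mul_eq_mul_div, mul_div_assoc, mul_div_cancel_right₀ _ (hlam s).ne'],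
      Real.sqrt_mul_self (hγ s).le]
  have hdil : ∀ s, (d s)⁻¹ * e s = lam s := by
    intro s
    rw [hd_def, he_def, ← Real.sqrt_inv, ← Real.sqrt_mul (inv_nonneg.2 (div_pos (hγ s) (hlam s)).le),
      show (γ s / lam s)⁻¹ * (γ s * lam s) = lam s * lam s from by
        rw [inv_div, div_mul_eq_mul_div, mul_comm (γ s) (lam s), mul_div_assoc,
          mul_div_cancel_right₀ _ (hγ s).ne'],
      Real.sqrt_mul_self (hlam s).le]
  have hDE : D * E = Matrix.diagonal γ := by
    rw [hD_def, hE_def, diagonal_mul_diagonal]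
    exact diagonal_congr hde
  have hED : E * Di = Matrix.diagonal lam := by
    rw [hE_def, hDi_def, diagonal_mul_diagonal]
    exact diagonal_congr fun s => by rw [mul_comm]; exact hdil s
  have hDiE : Di * E = Matrix.diagonal lam := by
    rw [hE_def, hDi_def, diagonal_mul_diagonal]
    exact diagonal_congr hdil
  have hEDd : E * D = Matrix.diagonal γ := by
    rw [hD_def, hE_def, diagonal_mul_diagonal]
    exact diagonal_congr fun s => by rw [mul_comm]; exact hde s
  have hGL : Matrix.diagonal γ * (Matrix.diagonal lam)⁻¹ = D * D := by
    rw [inv_diag' (fun s => (hlam s).ne'), hD_def, diagonal_mul_diagonal,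
      diagonal_mul_diagonal]
    refine diagonal_congr fun s => ?_
    rw [hd_def]
    rw [Real.mul_self_sqrt (div_pos (hγ s) (hlam s)).le, div_eq_mul_inv]
  have hconj : ∀ (A B : Matrix (Fin m) (Fin m) ℝ) (X Y : Matrix (Fin m) (Fin m) ℝ),
      A * B = 1 → A * (1 - β^2 • (X * Δ2 * Y)) * B
        = 1 - β^2 • ((A * X) * Δ2 * (Y * B)) := by
    intro A B X Y hAB
    rw [Matrix.mul_sub, Matrix.mul_one, Matrix.sub_mul, hAB, Matrix.mul_smul,
      Matrix.smul_mul]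
    congr 2
    simp only [mul_assoc]
  have hM : M = D * S * Di := by
    rw [hS_def, hconj D Di E E h1, hDE, hED]
  have hN : N = Di * S * D := by
    rw [hS_def, hconj Di D E E h2, hDiE, hEDd]
  have hDinv : D⁻¹ = Di := Matrix.inv_eq_right_inv h1
  have hDiinv : Di⁻¹ = D := Matrix.inv_eq_right_inv h2
  have hDunit : IsUnit D := by
    rw [Matrix.isUnit_iff_isUnit_det, hD_def, det_diagonal, isUnit_iff_ne_zero]
    exact (Finset.prod_pos fun s _ => hd s).ne'
  have hDiunit : IsUnit Di := by
    rw [Matrix.isUnit_iff_isUnit_det, hDi_def, det_diagonal, isUnit_iff_ne_zero]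
    exact (Finset.prod_pos fun s _ => inv_pos.2 (hd s)).ne'
  -- spectral data
  have hSh : S.IsHermitian := by
    rw [Matrix.IsHermitian, conjTranspose_eq_transpose_of_trivial, hS_def,
      Matrix.transpose_sub, Matrix.transpose_one, Matrix.transpose_smul,
      Matrix.transpose_mul, Matrix.transpose_mul, hsymm.eq, hE_def,
      Matrix.diagonal_transpose]
    rw [← mul_assoc]
  set U : Matrix (Fin m) (Fin m) ℝ := (hSh.eigenvectorUnitary : Matrix (Fin m) (Fin m) ℝ)
    with hU_def
  set w : Fin m → ℝ := hSh.eigenvalues with hw_def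
  have hU1 : U * star U = 1 := mem_unitaryGroup_iff.1 (SetLike.coe_mem _)
  have hU2 : star U * U = 1 := mem_unitaryGroup_iff'.1 (SetLike.coe_mem _)
  have hspec : S = U * Matrix.diagonal w * star U := by
    have h := hSh.spectral_theorem
    rw [hU_def, hw_def]
    exact h.trans (Unitary.conjStarAlgAut_apply _ _)
  have hmapsub : ∀ (x : ℝ) (A : Matrix (Fin m) (Fin m) ℝ),
      (x • (1 : Matrix (Fin m) (Fin m) ℝ) - A).map Complex.ofReal
        = (x : ℂ) • (1 : Matrix (Fin m) (Fin m) ℂ) - A.map Complex.ofReal := by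
    intro x A
    ext i j
    simp [Matrix.map_apply, Matrix.sub_apply, Matrix.smul_apply, Matrix.one_apply,
      apply_ite Complex.ofReal]
  have hw : ∀ k, 0 < w k := by
    intro k
    have hk : w k ∈ spectrum ℝ S := hSh.eigenvalues_mem_spectrum_real k
    rw [mem_spectrum_iff_det] at hk
    have hkc : ((w k : ℂ) • (1 : Matrix (Fin m) (Fin m) ℂ) - S.map Complex.ofReal).det = 0 := by
      rw [← hmapsub, _root_.det_map', hk, Complex.ofReal_zero]
    have hrelR : w k • (1 : Matrix (Fin m) (Fin m) ℝ) - M = D * (w k • 1 - S) * Di := by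
      conv_rhs => rw [Matrix.mul_sub, Matrix.sub_mul, Matrix.mul_smul, Matrix.smul_mul,
        Matrix.mul_one, h1, ← hM]
    have hMk : ((w k : ℂ) • (1 : Matrix (Fin m) (Fin m) ℂ) - M.map Complex.ofReal).det = 0 := by
      rw [← hmapsub, hrelR]
      rw [map_mul', map_mul', Matrix.det_mul, Matrix.det_mul, hmapsub, hkc,
        mul_zero, zero_mul]
    have hmem : ((w k : ℂ)) ∈ spectrum ℂ (M.map Complex.ofReal) := by
      rw [mem_spectrum_iff_det]; exact hMk
    have := hstable _ hmem
    simpa using this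
  set T : Matrix (Fin m) (Fin m) ℝ :=
    U * Matrix.diagonal (fun k => (w k)⁻¹) * star U with hT_def
  have hST : S * T = 1 := by
    rw [hT_def, hspec]
    simp only [mul_assoc]
    rw [show ∀ X : Matrix (Fin m) (Fin m) ℝ, star U * (U * X) = X from fun X => by
      rw [← mul_assoc, hU2, one_mul]]
    rw [← mul_assoc (Matrix.diagonal w), diagonal_mul_diagonal,
      show (fun s => w s * (w s)⁻¹) = fun _ => (1:ℝ) from
        funext fun s => mul_inv_cancel₀ (hw s).ne', diagonal_one, one_mul, hU1]
  have hSinv : S⁻¹ = T := Matrix.inv_eq_right_inv hST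
  -- the integrand
  set P : Matrix (Fin m) (Fin m) ℝ := D * U with hP_def
  have hUinv : U⁻¹ = star U := Matrix.inv_eq_right_inv hU1
  have hUunit : IsUnit U := by
    rw [Matrix.isUnit_iff_isUnit_det]
    exact IsUnit.of_mul_eq_one _ (by rw [← Matrix.det_mul, hU1, Matrix.det_one])
  have hstarU : star U = Uᵀ := by
    rw [Matrix.star_eq_conjTranspose, conjTranspose_eq_transpose_of_trivial]
  have hDt : Dᵀ = D := by rw [hD_def, Matrix.diagonal_transpose]
  have hcD : ∀ X : Matrix (Fin m) (Fin m) ℝ, D * (Di * X) = X := fun X => by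
    rw [← mul_assoc, h1, one_mul]
  have hcDi : ∀ X : Matrix (Fin m) (Fin m) ℝ, Di * (D * X) = X := fun X => by
    rw [← mul_assoc, h2, one_mul]
  have hfun : ∀ t : ℝ,
      (NormedSpace.exp ((-(t/2)) • M) * (Matrix.diagonal γ * (Matrix.diagonal lam)⁻¹) *
        NormedSpace.exp ((-(t/2)) • N))
      = P * Matrix.diagonal (fun k => Real.exp (-(w k * t))) * Pᵀ := by
    intro t
    have ha : NormedSpace.exp ((-(t/2)) • M) = D * NormedSpace.exp ((-(t/2)) • S) * Di := by
      have hsm : D * ((-(t/2:ℝ)) • S) * Di = (-(t/2:ℝ)) • (D * S * Di) := by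
        rw [Matrix.mul_smul, Matrix.smul_mul]
      rw [hM, ← hsm, ← hDinv, Matrix.exp_conj D _ hDunit, hDinv]
    have hb : NormedSpace.exp ((-(t/2)) • N) = Di * NormedSpace.exp ((-(t/2)) • S) * D := by
      have hsm : Di * ((-(t/2:ℝ)) • S) * D = (-(t/2:ℝ)) • (Di * S * D) := by
        rw [Matrix.mul_smul, Matrix.smul_mul]
      rw [hN, ← hsm, ← hDiinv, Matrix.exp_conj Di _ hDiunit, hDiinv]
    have hc : NormedSpace.exp ((-t) • S)
        = U * Matrix.diagonal (fun k => Real.exp (-(w k * t))) * star U := by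
      have hsm : U * ((-t) • Matrix.diagonal w) * star U
          = (-t) • (U * Matrix.diagonal w * star U) := by
        rw [Matrix.mul_smul, Matrix.smul_mul]
      have harg : (-t) • S = U * Matrix.diagonal ((-t) • w) * star U := by
        rw [hspec, ← hsm, Matrix.diagonal_smul]
      rw [harg, ← hUinv, Matrix.exp_conj U _ hUunit, hUinv, Matrix.exp_diagonal,
        show NormedSpace.exp ((-t) • w) = (fun k => Real.exp (-(w k * t))) from
          funext fun k => by
            rw [Pi.coe_exp, Pi.smul_apply, smul_eq_mul, ← Real.exp_eq_exp_ℝ]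
            ring_nf]
    have hXX : NormedSpace.exp ((-(t/2)) • S) * NormedSpace.exp ((-(t/2)) • S)
        = NormedSpace.exp ((-t) • S) := by
      rw [← Matrix.exp_add_of_commute _ _ (Commute.refl _), ← add_smul]
      congr 1
      ring
    rw [hGL, ha, hb, hP_def, Matrix.transpose_mul, hDt, ← hstarU]
    simp only [mul_assoc]
    rw [hcDi, hcD, show NormedSpace.exp ((-(t/2)) • S) *
        (NormedSpace.exp ((-(t/2)) • S) * D) = NormedSpace.exp ((-t) • S) * D from by
      rw [← mul_assoc, hXX], hc]
    simp only [mul_assoc]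
  -- final algebra
  have hMdet : IsUnit M.det := by
    by_contra h
    have h0 : (0:ℂ) ∈ spectrum ℂ (M.map Complex.ofReal) := by
      rw [mem_spectrum_iff_det, zero_smul, zero_sub, Matrix.det_neg, _root_.det_map']
      have hM0 : M.det = 0 := by rwa [isUnit_iff_ne_zero, not_not] at h
      rw [hM0, Complex.ofReal_zero, mul_zero]
    simpa using hstable 0 h0
  have hMK : M * Matrix.diagonal γ = Matrix.diagonal γ * K := by
    rw [hM_def, hK_def, Matrix.sub_mul, Matrix.mul_sub, Matrix.one_mul, Matrix.mul_one,
      Matrix.smul_mul, Matrix.mul_smul]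
    congr 2
    simp only [mul_assoc]
  have hKdet : IsUnit K.det := by
    have hdet := congrArg Matrix.det hMK
    rw [Matrix.det_mul, Matrix.det_mul] at hdet
    have hγdet : (Matrix.diagonal γ).det ≠ 0 := by
      rw [det_diagonal]; exact (Finset.prod_pos fun s _ => hγ s).ne'
    rw [isUnit_iff_ne_zero]
    intro hK0
    rw [hK0, mul_zero] at hdet
    rcases mul_eq_zero.1 hdet with h | h
    · exact (isUnit_iff_ne_zero.1 hMdet) h
    · exact hγdet h
  have hS2 : S = Di * M * D := by
    rw [hM]
    simp only [mul_assoc]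
    rw [hcDi, h2, mul_one]
  have hSinv2 : S⁻¹ = Di * M⁻¹ * D := by
    apply Matrix.inv_eq_right_inv
    rw [hS2]
    simp only [mul_assoc]
    rw [hcD, show M * (M⁻¹ * D) = D from by
      rw [← mul_assoc, Matrix.mul_nonsing_inv _ hMdet, one_mul], h2]
  have hGK : Matrix.diagonal γ * K⁻¹ = M⁻¹ * Matrix.diagonal γ := by
    calc Matrix.diagonal γ * K⁻¹
        = M⁻¹ * (M * Matrix.diagonal γ) * K⁻¹ := by
          rw [← mul_assoc, Matrix.nonsing_inv_mul _ hMdet, one_mul]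
      _ = M⁻¹ * (Matrix.diagonal γ * K) * K⁻¹ := by rw [hMK]
      _ = M⁻¹ * Matrix.diagonal γ * (K * K⁻¹) := by simp only [mul_assoc]
      _ = M⁻¹ * Matrix.diagonal γ := by rw [Matrix.mul_nonsing_inv _ hKdet, mul_one]
  have hfinal : P * Matrix.diagonal (fun k => (w k)⁻¹) * Pᵀ
      = Matrix.diagonal γ * K⁻¹ * (Matrix.diagonal lam)⁻¹ := by
    rw [hP_def, Matrix.transpose_mul, hDt, ← hstarU]
    have hleft : D * U * Matrix.diagonal (fun k => (w k)⁻¹) * (star U * D) = D * T * D := by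
      rw [hT_def]
      simp only [mul_assoc]
    rw [hleft, ← hSinv, hSinv2]
    calc D * (Di * M⁻¹ * D) * D = M⁻¹ * (D * D) := by
          simp only [mul_assoc]
          rw [hcD]
      _ = M⁻¹ * (Matrix.diagonal γ * (Matrix.diagonal lam)⁻¹) := by rw [← hGL]
      _ = M⁻¹ * Matrix.diagonal γ * (Matrix.diagonal lam)⁻¹ := by rw [mul_assoc]
      _ = Matrix.diagonal γ * K⁻¹ * (Matrix.diagonal lam)⁻¹ := by rw [hGK]
  intro i j
  have hrw : ∀ t : ℝ,
      (NormedSpace.exp ((-(t/2)) • M) * (Matrix.diagonal γ * (Matrix.diagonal lam)⁻¹) *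
        NormedSpace.exp ((-(t/2)) • N)) i j
      = ∑ k, (P i k * P j k) * Real.exp (-(w k * t)) := by
    intro t
    rw [hfun t, sandwich_apply]
    exact Finset.sum_congr rfl fun k _ => by ring
  simp only [hrw]
  have hintk : ∀ k : Fin m, IntegrableOn (fun t => (P i k * P j k) * Real.exp (-(w k * t)))
      (Set.Ioi (0:ℝ)) := by
    intro k
    have h := exp_neg_integrableOn_Ioi 0 (hw k)
    simp only [neg_mul] at h
    exact h.const_mul _
  rw [MeasureTheory.integral_finset_sum _ (fun k _ => hintk k)]
  have : ∀ k, (∫ t in Set.Ioi (0:ℝ), (P i k * P j k) * Real.exp (-(w k * t)))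
      = P i k * (w k)⁻¹ * P j k := by
    intro k
    rw [integral_const_mul, integral_exp_neg_mul_Ioi_zero (hw k)]
    ring
  simp only [this]
  rw [← sandwich_apply, hfinal]
end

section
/- Let Δ² be symmetric positive definite, Λ, Γ diagonal with positive entries, and β² > 1/ρ(ΓΔ²Λ). Then there exists a vector x ∈ ℝ^m with all entries strictly positive such that xᵀ Λ(β²Δ²ΛΓΔ² − Δ²)Λ x > 0. In fact, taking u the positive unit Perron eigenvector of (ΛΓ)^{1/2}Δ²(ΛΓ)^{1/2} and x = Λ^{−1/2}Γ^{1/2}u gives xᵀΛ(β²Δ²ΛΓΔ² − Δ²)Λx = ρ(ΓΔ²Λ)(β²ρ(ΓΔ²Λ) − 1) > 0. -/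
open Matrix

/-- Spectral radius of a real matrix: largest absolute value of its (complex) eigenvalues. -/
noncomputable def specRad {m : ℕ} (A : Matrix (Fin m) (Fin m) ℝ) : ℝ :=
  sSup {r : ℝ | ∃ μ ∈ spectrum ℂ (A.map (Complex.ofReal)), r = ‖μ‖}

lemma dp_symm {m : ℕ} {P : Matrix (Fin m) (Fin m) ℝ} (hP : P.IsHermitian)
    (x y : Fin m → ℝ) : y ⬝ᵥ P *ᵥ x = x ⬝ᵥ P *ᵥ y := by
  rw [dotProduct_mulVec, ← mulVec_transpose, dotProduct_comm]
  congr 2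

lemma mv_dp {m : ℕ} (P : Matrix (Fin m) (Fin m) ℝ) (x z : Fin m → ℝ) :
    (P *ᵥ x) ⬝ᵥ z = x ⬝ᵥ (Pᵀ *ᵥ z) := by
  rw [dotProduct_comm, dotProduct_mulVec, ← mulVec_transpose, dotProduct_comm]

lemma psd_cs {m : ℕ} {P : Matrix (Fin m) (Fin m) ℝ} (hP : P.PosSemidef) (x y : Fin m → ℝ) :
    (x ⬝ᵥ P *ᵥ y) ^ 2 ≤ (x ⬝ᵥ P *ᵥ x) * (y ⬝ᵥ P *ᵥ y) := by
  have key : ∀ t : ℝ, 0 ≤ (y ⬝ᵥ P *ᵥ y) * (t * t) + (2 * (x ⬝ᵥ P *ᵥ y)) * t + (x ⬝ᵥ P *ᵥ x) := by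
    intro t
    have h := hP.dotProduct_mulVec_nonneg (x + t • y)
    simp only [star_trivial, mulVec_add, mulVec_smul, dotProduct_add, add_dotProduct,
      dotProduct_smul, smul_dotProduct, smul_eq_mul] at h
    rw [dp_symm hP.1 x y] at h
    ring_nf at h ⊢
    linarith
  have h2 : discrim (y ⬝ᵥ P *ᵥ y) (2 * (x ⬝ᵥ P *ᵥ y)) (x ⬝ᵥ P *ᵥ x) ≤ 0 := discrim_le_zero key
  rw [discrim] at h2
  nlinarith

lemma dp_abs_le {m : ℕ} {N : Matrix (Fin m) (Fin m) ℝ} (hN : ∀ i j, 0 ≤ N i j) (v : Fin m → ℝ) :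
    v ⬝ᵥ N *ᵥ v ≤ (fun i => |v i|) ⬝ᵥ N *ᵥ (fun i => |v i|) := by
  simp only [dotProduct, mulVec, Finset.mul_sum]
  refine Finset.sum_le_sum fun i _ => Finset.sum_le_sum fun j _ => ?_
  calc v i * (N i j * v j) ≤ |v i * (N i j * v j)| := le_abs_self _
    _ = |v i| * (N i j * |v j|) := by rw [abs_mul, abs_mul, abs_of_nonneg (hN i j)]

lemma rayleigh {m : ℕ} {M : Matrix (Fin m) (Fin m) ℝ} (hM : M.IsHermitian)
    {lmax : ℝ} (hmax : ∀ i, hM.eigenvalues i ≤ lmax) (z : Fin m → ℝ) :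
    z ⬝ᵥ M *ᵥ z ≤ lmax * (z ⬝ᵥ z) := by
  set U : Matrix (Fin m) (Fin m) ℝ := (hM.eigenvectorUnitary : Matrix (Fin m) (Fin m) ℝ) with hU
  have hU1 : U * star U = 1 := mem_unitaryGroup_iff.mp hM.eigenvectorUnitary.2
  have hsU : star U = Uᵀ := by
    rw [star_eq_conjTranspose, conjTranspose_eq_transpose_of_trivial]
  set c : Fin m → ℝ := star U *ᵥ z with hc
  have hev : (RCLike.ofReal ∘ hM.eigenvalues : Fin m → ℝ) = hM.eigenvalues := by
    rw [RCLike.ofReal_real_eq_id, Function.id_comp]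
  have h1 : z ⬝ᵥ M *ᵥ z = c ⬝ᵥ (diagonal hM.eigenvalues) *ᵥ c := by
    conv_lhs => rw [hM.spectral_theorem]
    rw [Unitary.conjStarAlgAut_apply, hev, ← hU, Matrix.mul_assoc, ← mulVec_mulVec, ← mulVec_mulVec,
      dotProduct_mulVec z U, ← hc]
    congr 1
    rw [hc, hsU, mulVec_transpose]
  have h2 : z ⬝ᵥ z = c ⬝ᵥ c := by
    rw [hc, mv_dp, mulVec_mulVec, hsU, transpose_transpose, ← hsU, hU1, one_mulVec]
  rw [h1, h2]
  simp only [dotProduct, mulVec_diagonal, Finset.mul_sum]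
  refine Finset.sum_le_sum fun i _ => ?_
  have h3 : 0 ≤ c i * c i := mul_self_nonneg _
  have := hmax i
  nlinarith

lemma spec_conj_diag {n : ℕ} (A : Matrix (Fin n) (Fin n) ℝ)
    (T T' : Matrix (Fin n) (Fin n) ℝ) (ev : Fin n → ℝ)
    (h1 : T * T' = 1) (h2 : T' * T = 1)
    (hA : A = T * Matrix.diagonal ev * T') :
    spectrum ℂ (A.map Complex.ofReal) = Set.range (fun i => (ev i : ℂ)) := by
  have hre : (Complex.ofReal : ℝ → ℂ) = ⇑Complex.ofRealHom := rfl
  have hmap : A.map Complex.ofReal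
      = (T.map Complex.ofReal) * Matrix.diagonal (fun i => (ev i : ℂ)) * (T'.map Complex.ofReal) := by
    subst hA
    rw [hre, Matrix.map_mul, Matrix.map_mul]
    congr 1
    rw [Matrix.diagonal_map (by simp)]
  have hu1 : (T.map Complex.ofReal) * (T'.map Complex.ofReal) = 1 := by
    rw [hre, ← Matrix.map_mul, h1, Matrix.map_one _ (by simp) (by simp)]
  have hu2 : (T'.map Complex.ofReal) * (T.map Complex.ofReal) = 1 := by
    rw [hre, ← Matrix.map_mul, h2, Matrix.map_one _ (by simp) (by simp)]
  let u : (Matrix (Fin n) (Fin n) ℂ)ˣ := ⟨T.map Complex.ofReal, T'.map Complex.ofReal, hu1, hu2⟩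
  have := spectrum.units_conjugate (R := ℂ) (a := Matrix.diagonal (fun i => (ev i : ℂ))) (u := u)
  rw [hmap]
  rw [show (T'.map Complex.ofReal) = (↑u⁻¹ : Matrix (Fin n) (Fin n) ℂ) from rfl]
  rw [show (T.map Complex.ofReal) = (↑u : Matrix (Fin n) (Fin n) ℂ) from rfl]
  rw [spectrum.units_conjugate, spectrum_diagonal]
set_option maxHeartbeats 2000000

/-- Above the AT line (`β² > 1/ρ(ΓΔ²Λ)`), there is a strictly positive vector `x` with
`xᵀΛ(β²Δ²ΛΓΔ² − Δ²)Λx > 0`. -/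
theorem stmt19 {m : ℕ} (hm : 0 < m) (γ lam : Fin m → ℝ)
    (hγ : ∀ s, 0 < γ s) (hlam : ∀ s, 0 < lam s)
    (Δ2 : Matrix (Fin m) (Fin m) ℝ) (hposdef : Δ2.PosDef) (hpos : ∀ i j, 0 < Δ2 i j)
    (Γ Λ : Matrix (Fin m) (Fin m) ℝ)
    (hΓ : Γ = Matrix.diagonal γ) (hΛ : Λ = Matrix.diagonal lam)
    (β : ℝ) (hβ : β ^ 2 > 1 / specRad (Γ * Δ2 * Λ)) :
    ∃ x : Fin m → ℝ, (∀ i, 0 < x i) ∧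
      0 < x ⬝ᵥ (Λ * (β ^ 2 • (Δ2 * Λ * Γ * Δ2) - Δ2) * Λ).mulVec x := by
  subst hΓ hΛ
  -- the symmetrized matrix M
  set d : Fin m → ℝ := fun i => Real.sqrt (γ i * lam i) with hd
  have hdpos : ∀ i, 0 < d i := fun i => Real.sqrt_pos.mpr (mul_pos (hγ i) (hlam i))
  set D : Matrix (Fin m) (Fin m) ℝ := diagonal d with hD
  set M : Matrix (Fin m) (Fin m) ℝ := D * Δ2 * D with hM
  have hDT : Dᵀ = D := diagonal_transpose d
  have hMposdef : M.PosDef := by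
    refine Matrix.PosDef.of_dotProduct_mulVec_pos ?_ ?_
    · show Mᴴ = M
      rw [conjTranspose_eq_transpose_of_trivial, hM, transpose_mul, transpose_mul, hDT,
        ← conjTranspose_eq_transpose_of_trivial, hposdef.1.eq, Matrix.mul_assoc]
    · intro x hx
      have hDx : D *ᵥ x ≠ 0 := by
        obtain ⟨i, hi⟩ := Function.ne_iff.mp hx
        intro h
        have := congrFun h i
        simp only [hD, mulVec_diagonal, Pi.zero_apply] at this
        exact hi (by
          rcases mul_eq_zero.mp this with h' | h'
          · exact absurd h' (hdpos i).ne'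
          · exact h')
      have := hposdef.dotProduct_mulVec_pos hDx
      simp only [star_trivial] at this ⊢
      rw [mv_dp, hDT, mulVec_mulVec, mulVec_mulVec] at this
      exact this
  have herm : M.IsHermitian := hMposdef.1
  have hMT : Mᵀ = M := by rw [← conjTranspose_eq_transpose_of_trivial, herm.eq]
  set ev : Fin m → ℝ := herm.eigenvalues with hevdef
  have hevpos : ∀ i, 0 < ev i := hMposdef.eigenvalues_pos
  obtain ⟨i₀, -, hi₀⟩ := Finset.exists_max_image Finset.univ ev ⟨⟨0, hm⟩, Finset.mem_univ _⟩
  set l : ℝ := ev i₀ with hldef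
  have hlpos : 0 < l := hevpos i₀
  have hi₀' : ∀ i, ev i ≤ l := fun i => hi₀ i (Finset.mem_univ i)
  -- conjugating matrices
  set s : Fin m → ℝ := fun i => Real.sqrt (γ i / lam i) with hs
  have hspos : ∀ i, 0 < s i := fun i => Real.sqrt_pos.mpr (div_pos (hγ i) (hlam i))
  set S : Matrix (Fin m) (Fin m) ℝ := diagonal s with hS
  set S' : Matrix (Fin m) (Fin m) ℝ := diagonal (fun i => (s i)⁻¹) with hS'
  have hSD : S * D = diagonal γ := by
    rw [hS, hD, diagonal_mul_diagonal]
    refine congrArg diagonal (funext fun i => ?_)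
    show Real.sqrt (γ i / lam i) * Real.sqrt (γ i * lam i) = γ i
    rw [← Real.sqrt_mul (div_pos (hγ i) (hlam i)).le]
    rw [show γ i / lam i * (γ i * lam i) = (γ i) ^ 2 by
      field_simp [(hlam i).ne']]
    exact Real.sqrt_sq (hγ i).le
  have hds : ∀ i, d i = lam i * s i := by
    intro i
    show Real.sqrt (γ i * lam i) = lam i * Real.sqrt (γ i / lam i)
    rw [show lam i * Real.sqrt (γ i / lam i) = Real.sqrt ((lam i) ^ 2 * (γ i / lam i)) by
      rw [Real.sqrt_mul (sq_nonneg _), Real.sqrt_sq (hlam i).le]]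
    congr 1
    field_simp [(hlam i).ne']
  have hDS' : D * S' = diagonal lam := by
    rw [hD, hS', diagonal_mul_diagonal]
    refine congrArg diagonal (funext fun i => ?_)
    rw [hds i, mul_assoc, mul_inv_cancel₀ (hspos i).ne', mul_one]
  have hSS' : S * S' = 1 := by
    rw [hS, hS', diagonal_mul_diagonal, ← diagonal_one]
    exact congrArg diagonal (funext fun i => mul_inv_cancel₀ (hspos i).ne')
  have hS'S : S' * S = 1 := by
    rw [hS, hS', diagonal_mul_diagonal, ← diagonal_one]
    exact congrArg diagonal (funext fun i => inv_mul_cancel₀ (hspos i).ne')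
  -- the unitary
  set U : Matrix (Fin m) (Fin m) ℝ := (herm.eigenvectorUnitary : Matrix (Fin m) (Fin m) ℝ)
    with hU
  have hU1 : U * star U = 1 := mem_unitaryGroup_iff.mp herm.eigenvectorUnitary.2
  have hU2 : star U * U = 1 := mem_unitaryGroup_iff'.mp herm.eigenvectorUnitary.2
  have hev : (RCLike.ofReal ∘ ev : Fin m → ℝ) = ev := by
    rw [RCLike.ofReal_real_eq_id, Function.id_comp]
  have hspec : M = U * diagonal ev * star U := by
    conv_lhs => rw [herm.spectral_theorem]
    rw [Unitary.conjStarAlgAut_apply, hev, ← hU]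
  have hconj : diagonal γ * Δ2 * diagonal lam = (S * U) * diagonal ev * (star U * S') := by
    rw [← hSD, ← hDS']
    rw [show S * D * Δ2 * (D * S') = S * (D * Δ2 * D) * S' by
      simp only [Matrix.mul_assoc]]
    rw [← hM, hspec]
    simp only [Matrix.mul_assoc]
  have hTT' : (S * U) * (star U * S') = 1 := by
    rw [show (S * U) * (star U * S') = S * (U * star U) * S' by simp only [Matrix.mul_assoc],
      hU1, Matrix.mul_one, hSS']
  have hT'T : (star U * S') * (S * U) = 1 := by
    rw [show (star U * S') * (S * U) = star U * (S' * S) * U by simp only [Matrix.mul_assoc],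
      hS'S, Matrix.mul_one, hU2]
  have hspecset : spectrum ℂ ((diagonal γ * Δ2 * diagonal lam).map Complex.ofReal)
      = Set.range (fun i => ((ev i : ℝ) : ℂ)) :=
    spec_conj_diag _ _ _ _ hTT' hT'T hconj
  have hrho : specRad (diagonal γ * Δ2 * diagonal lam) = l := by
    rw [specRad, hspecset]
    have hset : {r : ℝ | ∃ μ ∈ Set.range (fun i => ((ev i : ℝ) : ℂ)), r = ‖μ‖}
        = Set.range ev := by
      ext r
      simp only [Set.mem_setOf_eq, Set.mem_range]
      constructor
      · rintro ⟨μ, ⟨i, rfl⟩, rfl⟩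
        exact ⟨i, by rw [Complex.norm_real, Real.norm_eq_abs, abs_of_pos (hevpos i)]⟩
      · rintro ⟨i, rfl⟩
        exact ⟨((ev i : ℝ) : ℂ), ⟨i, rfl⟩, by rw [Complex.norm_real, Real.norm_eq_abs, abs_of_pos (hevpos i)]⟩
    rw [hset]
    exact IsGreatest.csSup_eq ⟨⟨i₀, rfl⟩, by rintro r ⟨i, rfl⟩; exact hi₀' i⟩
  rw [hrho] at hβ
  have hβl : 1 < β ^ 2 * l := by
    have := (div_lt_iff₀ hlpos).mp hβ
    linarith
  -- the top eigenvector and its absolute value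
  set v0 : Fin m → ℝ := ⇑(herm.eigenvectorBasis i₀) with hv0def
  have hv0eig : M *ᵥ v0 = l • v0 := herm.mulVec_eigenvectorBasis i₀
  have hv0ne : v0 ≠ 0 := by
    have h := herm.eigenvectorBasis.orthonormal.ne_zero i₀
    intro h0
    apply h
    ext i
    exact congrFun h0 i
  obtain ⟨j₀, hj₀⟩ := Function.ne_iff.mp hv0ne
  set w : Fin m → ℝ := fun i => |v0 i| with hw
  have hwnn : ∀ i, 0 ≤ w i := fun i => abs_nonneg _
  have hwj₀ : 0 < w j₀ := abs_pos.mpr (by simpa using hj₀)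
  have hwne : w ≠ 0 := fun h => absurd (congrFun h j₀) hwj₀.ne'
  set n0 : ℝ := v0 ⬝ᵥ v0 with hn0
  have hn0pos : 0 < n0 := by
    rw [hn0]
    refine Finset.sum_pos' (fun i _ => mul_self_nonneg _) ⟨j₀, Finset.mem_univ _, ?_⟩
    exact mul_self_pos.mpr (by simpa using hj₀)
  set a1 : ℝ := w ⬝ᵥ M *ᵥ w with ha1
  set a2 : ℝ := w ⬝ᵥ M *ᵥ (M *ᵥ w) with ha2
  set a3 : ℝ := w ⬝ᵥ M *ᵥ (M *ᵥ (M *ᵥ w)) with ha3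
  set a4 : ℝ := w ⬝ᵥ M *ᵥ (M *ᵥ (M *ᵥ (M *ᵥ w))) with ha4
  have hMpsd : M.PosSemidef := hMposdef.posSemidef
  have ha1pos : 0 < a1 := by
    have := hMposdef.dotProduct_mulVec_pos hwne
    simpa [star_trivial] using this
  have hww : w ⬝ᵥ w = n0 := by
    rw [hn0]
    simp only [dotProduct, hw]
    exact Finset.sum_congr rfl fun i _ => abs_mul_abs_self _
  have ha1le : a1 ≤ l * n0 := by
    rw [ha1, ← hww]
    exact rayleigh herm hi₀' w
  have hMMnn : ∀ i j, 0 ≤ (M * M) i j := by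
    intro i j
    rw [mul_apply]
    refine Finset.sum_nonneg fun k _ => le_of_lt (mul_pos ?_ ?_) <;>
    · rw [hM, hD, mul_diagonal, diagonal_mul]
      exact mul_pos (mul_pos (hdpos _) (hpos _ _)) (hdpos _)
  have ha2ge : l ^ 2 * n0 ≤ a2 := by
    have h1 : v0 ⬝ᵥ (M * M) *ᵥ v0 = l ^ 2 * n0 := by
      rw [← mulVec_mulVec, hv0eig, mulVec_smul, hv0eig, dotProduct_smul, dotProduct_smul,
        smul_eq_mul, smul_eq_mul, ← hn0]
      ring
    have h2 := dp_abs_le hMMnn v0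
    rw [h1] at h2
    rw [ha2, mulVec_mulVec]
    exact h2
  have h21 : l * a1 ≤ a2 := by
    calc l * a1 ≤ l * (l * n0) := mul_le_mul_of_nonneg_left ha1le hlpos.le
      _ = l ^ 2 * n0 := by ring
      _ ≤ a2 := ha2ge
  have ha2pos : 0 < a2 := lt_of_lt_of_le (mul_pos hlpos ha1pos) h21
  have hmove : ∀ z : Fin m → ℝ, (M *ᵥ w) ⬝ᵥ z = w ⬝ᵥ M *ᵥ z := by
    intro z
    rw [mv_dp, hMT]
  have hCS1 : a2 ^ 2 ≤ a1 * a3 := by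
    have := psd_cs hMpsd w (M *ᵥ w)
    rwa [hmove (M *ᵥ (M *ᵥ w)), ← ha1, ← ha2, ← ha3] at this
  have hMMpsd : (M * M).PosSemidef := by
    have := posSemidef_self_mul_conjTranspose M
    rwa [show Mᴴ = M from herm.eq] at this
  have hCS2 : a3 ^ 2 ≤ a2 * a4 := by
    have := psd_cs hMMpsd w (M *ᵥ w)
    simp only [← mulVec_mulVec] at this
    rwa [hmove (M *ᵥ (M *ᵥ (M *ᵥ w))), ← ha2, ← ha3, ← ha4] at this
  have h32 : l * a2 ≤ a3 := by
    nlinarith [hCS1, mul_le_mul_of_nonneg_right h21 ha2pos.le, ha1pos, ha2pos]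
  have ha3pos : 0 < a3 := lt_of_lt_of_le (mul_pos hlpos ha2pos) h32
  have h43 : l * a3 ≤ a4 := by
    nlinarith [hCS2, mul_le_mul_of_nonneg_right h32 ha3pos.le, ha2pos, ha3pos]
  -- the positive vector
  set u : Fin m → ℝ := M *ᵥ w with hu
  have hupos : ∀ i, 0 < u i := by
    intro i
    rw [hu]
    show (0 : ℝ) < ∑ j, M i j * w j
    refine Finset.sum_pos' (fun j _ => mul_nonneg ?_ (hwnn j)) ⟨j₀, Finset.mem_univ _, ?_⟩
    · rw [hM, hD, mul_diagonal, diagonal_mul]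
      exact (mul_pos (mul_pos (hdpos _) (hpos _ _)) (hdpos _)).le
    · refine mul_pos ?_ hwj₀
      rw [hM, hD, mul_diagonal, diagonal_mul]
      exact mul_pos (mul_pos (hdpos _) (hpos _ _)) (hdpos _)
  refine ⟨fun i => d i / lam i * u i, fun i => mul_pos (div_pos (hdpos i) (hlam i)) (hupos i), ?_⟩
  set x : Fin m → ℝ := fun i => d i / lam i * u i with hx
  have hΛx : diagonal lam *ᵥ x = D *ᵥ u := by
    funext i
    rw [hD, mulVec_diagonal, mulVec_diagonal, hx]
    show lam i * (d i / lam i * u i) = d i * u i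
    rw [show lam i * (d i / lam i * u i) = lam i * (d i * u i) / lam i by ring]
    exact mul_div_cancel_left₀ _ (hlam i).ne'
  have hΛΓ : diagonal lam * diagonal γ = D * D := by
    rw [hD, diagonal_mul_diagonal, diagonal_mul_diagonal]
    refine congrArg diagonal (funext fun i => ?_)
    show lam i * γ i = d i * d i
    rw [hd]
    show lam i * γ i = Real.sqrt (γ i * lam i) * Real.sqrt (γ i * lam i)
    rw [Real.mul_self_sqrt (mul_pos (hγ i) (hlam i)).le]
    ring
  -- final computation
  have diag_move : ∀ (dd : Fin m → ℝ) (p z : Fin m → ℝ),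
      (diagonal dd *ᵥ p) ⬝ᵥ z = p ⬝ᵥ diagonal dd *ᵥ z := by
    intro dd p z
    rw [mv_dp, diagonal_transpose]
  have hmat : Δ2 * diagonal lam * diagonal γ * Δ2 = Δ2 * (D * D) * Δ2 := by
    rw [Matrix.mul_assoc Δ2 (diagonal lam) (diagonal γ), hΛΓ]
  have hT2 : (D *ᵥ u) ⬝ᵥ Δ2 *ᵥ (D *ᵥ u) = a3 := by
    rw [mv_dp, hDT]
    simp only [mulVec_mulVec, ← Matrix.mul_assoc]
    rw [← hM, hu]
    rw [show ((M *ᵥ w) ⬝ᵥ M *ᵥ (M *ᵥ w) = w ⬝ᵥ M *ᵥ (M *ᵥ (M *ᵥ w))) from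
      hmove (M *ᵥ (M *ᵥ w)), ← ha3]
  have hT1 : (D *ᵥ u) ⬝ᵥ (Δ2 * diagonal lam * diagonal γ * Δ2) *ᵥ (D *ᵥ u) = a4 := by
    rw [hmat, mv_dp, hDT]
    simp only [mulVec_mulVec, ← Matrix.mul_assoc]
    rw [show D * Δ2 * D * D * Δ2 * D = M * M from by
      rw [hM]; simp only [← Matrix.mul_assoc]]
    simp only [← mulVec_mulVec]
    rw [hu]
    rw [show ((M *ᵥ w) ⬝ᵥ M *ᵥ (M *ᵥ (M *ᵥ w)) = w ⬝ᵥ M *ᵥ (M *ᵥ (M *ᵥ (M *ᵥ w)))) from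
      hmove (M *ᵥ (M *ᵥ (M *ᵥ w))), ← ha4]
  have hE : x ⬝ᵥ (diagonal lam * (β ^ 2 • (Δ2 * diagonal lam * diagonal γ * Δ2) - Δ2)
      * diagonal lam) *ᵥ x = β ^ 2 * a4 - a3 := by
    rw [← mulVec_mulVec, ← mulVec_mulVec, ← diag_move lam x
      ((β ^ 2 • (Δ2 * diagonal lam * diagonal γ * Δ2) - Δ2) *ᵥ (diagonal lam *ᵥ x)), hΛx]
    rw [sub_mulVec, smul_mulVec, dotProduct_sub, dotProduct_smul, smul_eq_mul]
    rw [hT1, hT2]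
  rw [show (diagonal lam * (β ^ 2 • (Δ2 * diagonal lam * diagonal γ * Δ2) - Δ2)
      * diagonal lam).mulVec x = (diagonal lam * (β ^ 2 • (Δ2 * diagonal lam * diagonal γ * Δ2)
      - Δ2) * diagonal lam) *ᵥ x from rfl, hE]
  nlinarith [mul_le_mul_of_nonneg_left h43 (sq_nonneg β), mul_pos (sub_pos.mpr hβl) ha3pos,
    ha3pos]
end
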